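/- arXiv:2001.11276 — 6 statements merged into one kernel-verified Lean document; each statement's English description precedes it below -/
import Mathlib

section
/- The vector fields D = z∂_z + 2w∂_w, R = iz∂_z, I₁ = (w + 2iz²)∂_z + 2izw∂_w, I₂ = (iw + 2z²)∂_z + 2zw∂_w, J = zw∂_z + w²∂_w on ℂ² satisfy the commutation relations: [D,R]=0, [D,I₁]=I₁, [D,I₂]=I₂, [D,J]=2J, [R,I₁]=−I₂, [R,I₂]=I₁, [R,J]=0, [I₁,I₂]=4J, [I₁,J]=0, [I₂,J]=0. -/
open Complex

noncomputable section

/-- Lie bracket of holomorphic vector fields on ℂ² (viewed as maps `ℂ × ℂ → ℂ × ℂ`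
giving the `∂_z` and `∂_w` components): `[X,Y](p) = DY(p)[X(p)] − DX(p)[Y(p)]`. -/
def VFbracket (X Y : ℂ × ℂ → ℂ × ℂ) : ℂ × ℂ → ℂ × ℂ :=
  fun p => fderiv ℂ Y p (X p) - fderiv ℂ X p (Y p)

def VF_D : ℂ × ℂ → ℂ × ℂ := fun p => (p.1, 2 * p.2)
def VF_R : ℂ × ℂ → ℂ × ℂ := fun p => (I * p.1, 0)
def VF_I1 : ℂ × ℂ → ℂ × ℂ := fun p => (p.2 + 2 * I * p.1 ^ 2, 2 * I * p.1 * p.2)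
def VF_I2 : ℂ × ℂ → ℂ × ℂ := fun p => (I * p.2 + 2 * p.1 ^ 2, 2 * p.1 * p.2)
def VF_J : ℂ × ℂ → ℂ × ℂ := fun p => (p.1 * p.2, p.2 ^ 2)

private lemma fd_apply {f g : ℂ × ℂ → ℂ} {p : ℂ × ℂ} {Lf Lg : ℂ × ℂ →L[ℂ] ℂ}
    (hf : HasFDerivAt f Lf p) (hg : HasFDerivAt g Lg p) (v : ℂ × ℂ) :
    fderiv ℂ (fun q => (f q, g q)) p v = (Lf v, Lg v) := by
  rw [(hf.prodMk hg).fderiv]; rfl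

private lemma fdD (p v : ℂ × ℂ) : fderiv ℂ VF_D p v = (v.1, 2 * v.2) := by
  unfold VF_D; rw [fd_apply hasFDerivAt_fst (hasFDerivAt_snd.const_mul 2) v]
  simp

private lemma fdR (p v : ℂ × ℂ) : fderiv ℂ VF_R p v = (I * v.1, 0) := by
  unfold VF_R; rw [fd_apply (hasFDerivAt_fst.const_mul I) (hasFDerivAt_const 0 p) v]
  simp

private lemma fdI1 (p v : ℂ × ℂ) :
    fderiv ℂ VF_I1 p v = (v.2 + 4 * I * p.1 * v.1, 2 * I * v.1 * p.2 + 2 * I * p.1 * v.2) := by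
  have e : VF_I1 = fun q : ℂ × ℂ => (q.2 + 2 * I * (q.1 * q.1), 2 * I * q.1 * q.2) := by
    funext q; unfold VF_I1; simp; ring
  erw [e, fd_apply (hasFDerivAt_snd.add ((hasFDerivAt_fst.mul hasFDerivAt_fst).const_mul (2 * I)))
      ((hasFDerivAt_fst.const_mul (2 * I)).mul hasFDerivAt_snd) v]
  simp
  constructor <;> ring

private lemma fdI2 (p v : ℂ × ℂ) :
    fderiv ℂ VF_I2 p v = (I * v.2 + 4 * p.1 * v.1, 2 * v.1 * p.2 + 2 * p.1 * v.2) := by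
  have e : VF_I2 = fun q : ℂ × ℂ => (I * q.2 + 2 * (q.1 * q.1), 2 * q.1 * q.2) := by
    funext q; unfold VF_I2; simp; ring
  erw [e, fd_apply ((hasFDerivAt_snd.const_mul I).add
      ((hasFDerivAt_fst.mul hasFDerivAt_fst).const_mul 2))
      ((hasFDerivAt_fst.const_mul 2).mul hasFDerivAt_snd) v]
  simp
  constructor <;> ring

private lemma fdJ (p v : ℂ × ℂ) :
    fderiv ℂ VF_J p v = (v.1 * p.2 + p.1 * v.2, 2 * p.2 * v.2) := by
  have e : VF_J = fun q : ℂ × ℂ => (q.1 * q.2, q.2 * q.2) := by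
    funext q; unfold VF_J; simp; ring
  erw [e, fd_apply (hasFDerivAt_fst.mul hasFDerivAt_snd)
      (hasFDerivAt_snd.mul hasFDerivAt_snd) v]
  simp
  constructor <;> ring

/-- Commutation relations of the isotropy algebra of the Heisenberg sphere:
`[D,R]=0, [D,I₁]=I₁, [D,I₂]=I₂, [D,J]=2J, [R,I₁]=−I₂, [R,I₂]=I₁, [R,J]=0,
`[I₁,I₂]=4J, [I₁,J]=0, [I₂,J]=0`. -/
theorem isotropy_commutation_relations :
    (VFbracket VF_D VF_R = fun _ => 0) ∧
    (VFbracket VF_D VF_I1 = VF_I1) ∧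
    (VFbracket VF_D VF_I2 = VF_I2) ∧
    (VFbracket VF_D VF_J = fun p => (2 : ℂ) • VF_J p) ∧
    (VFbracket VF_R VF_I1 = fun p => -VF_I2 p) ∧
    (VFbracket VF_R VF_I2 = VF_I1) ∧
    (VFbracket VF_R VF_J = fun _ => 0) ∧
    (VFbracket VF_I1 VF_I2 = fun p => (4 : ℂ) • VF_J p) ∧
    (VFbracket VF_I1 VF_J = fun _ => 0) ∧
    (VFbracket VF_I2 VF_J = fun _ => 0) := by
  refine ⟨?_, ?_, ?_, ?_, ?_, ?_, ?_, ?_, ?_, ?_⟩ <;>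
  · funext p
    simp only [VFbracket, fdD, fdR, fdI1, fdI2, fdJ, VF_D, VF_R, VF_I1, VF_I2, VF_J,
      Prod.mk_sub_mk, Prod.smul_mk, smul_eq_mul, Prod.neg_mk, Prod.mk.injEq, Prod.mk_eq_zero]
    constructor <;> ring_nf <;> simp [Complex.I_sq] <;> ring

end
end

section
/- For all (x₁,y₁,x₂,y₂) ∈ ℝ⁴, the 4×4 real matrix M = [[0,0,−3a₂,−3b₂],[0,0,−b₂,a₂],[1,0,−2x₁²−6y₁²,4x₁y₁],[0,1,−4x₁y₁,6x₁²+2y₁²]], where a₂ := x₂ + 2x₁²y₁ + 2y₁³ and b₂ := y₂ − 2x₁y₁² − 2x₁³, has rank 4 if (a₂,b₂) ≠ (0,0) and rank 2 if (a₂,b₂) = (0,0). -/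
/-- For all `(x₁,y₁,x₂,y₂) ∈ ℝ⁴`, with `a₂ := x₂ + 2x₁²y₁ + 2y₁³` and
`b₂ := y₂ − 2x₁y₁² − 2x₁³`, the matrix
`[[0,0,−3a₂,−3b₂],[0,0,−b₂,a₂],[1,0,−2x₁²−6y₁²,4x₁y₁],[0,1,−4x₁y₁,6x₁²+2y₁²]]`
has rank 4 iff `(a₂,b₂) ≠ (0,0)`, and rank 2 otherwise. -/
theorem rank_of_prolonged_fields_matrix (x₁ y₁ x₂ y₂ : ℝ) :
    let a₂ : ℝ := x₂ + 2 * x₁ ^ 2 * y₁ + 2 * y₁ ^ 3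
    let b₂ : ℝ := y₂ - 2 * x₁ * y₁ ^ 2 - 2 * x₁ ^ 3
    let M : Matrix (Fin 4) (Fin 4) ℝ :=
      !![0, 0, -3 * a₂, -3 * b₂;
         0, 0, -b₂, a₂;
         1, 0, -2 * x₁ ^ 2 - 6 * y₁ ^ 2, 4 * x₁ * y₁;
         0, 1, -4 * x₁ * y₁, 6 * x₁ ^ 2 + 2 * y₁ ^ 2]
    ((a₂, b₂) ≠ (0, 0) → M.rank = 4) ∧ ((a₂, b₂) = (0, 0) → M.rank = 2) := by
  intro a₂ b₂ M
  constructor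
  · intro h
    have hab : a₂ ≠ 0 ∨ b₂ ≠ 0 := by
      by_contra hc
      push_neg at hc
      exact h (by simp [hc.1, hc.2])
    have hdet : M.det ≠ 0 := by
      have hd : M.det = -(3 * (a₂ ^ 2 + b₂ ^ 2)) := by
        show Matrix.det !![0, 0, -3 * a₂, -3 * b₂; 0, 0, -b₂, a₂;
           1, 0, -2 * x₁ ^ 2 - 6 * y₁ ^ 2, 4 * x₁ * y₁;
           0, 1, -4 * x₁ * y₁, 6 * x₁ ^ 2 + 2 * y₁ ^ 2] = _
        simp [Matrix.det_succ_row_zero, Fin.sum_univ_succ, Fin.succAbove, Matrix.vecHead,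
          Matrix.vecTail, Fin.castSucc, Fin.castAdd, Fin.castLE]
        ring
      have hpos : 0 < a₂ ^ 2 + b₂ ^ 2 := by
        rcases hab with ha | hb
        · positivity
        · positivity
      rw [hd]
      intro hc
      nlinarith
    have := Matrix.rank_of_isUnit M ((Matrix.isUnit_iff_isUnit_det M).mpr (isUnit_iff_ne_zero.mpr hdet))
    simpa using this
  · intro h
    have ha : a₂ = 0 := congrArg Prod.fst h
    have hb : b₂ = 0 := congrArg Prod.snd h
    set P : Matrix (Fin 4) (Fin 4) ℝ :=
      !![0,0,1,0; 0,0,0,1; 1,0,0,0; 0,1,0,0] with hP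
    set N : Matrix (Fin 4) (Fin 4) ℝ :=
      !![1,0, 2*x₁^2+6*y₁^2, -4*x₁*y₁;
         0,1, 4*x₁*y₁, -(6*x₁^2+2*y₁^2);
         0,0,1,0; 0,0,0,1] with hN
    have hPdet : IsUnit P.det := by
      simp [hP, Matrix.det_succ_row_zero, Fin.sum_univ_succ, Fin.succAbove, Matrix.vecHead,
        Matrix.vecTail]
    have hNdet : IsUnit N.det := by
      simp [hN, Matrix.det_succ_row_zero, Fin.sum_univ_succ, Fin.succAbove, Matrix.vecHead,
        Matrix.vecTail]
    have hM : M = !![0,0,0,0; 0,0,0,0;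
        1,0,-2*x₁^2-6*y₁^2,4*x₁*y₁; 0,1,-4*x₁*y₁,6*x₁^2+2*y₁^2] := by
      show !![0, 0, -3 * a₂, -3 * b₂; 0, 0, -b₂, a₂;
         1, 0, -2 * x₁ ^ 2 - 6 * y₁ ^ 2, 4 * x₁ * y₁;
         0, 1, -4 * x₁ * y₁, 6 * x₁ ^ 2 + 2 * y₁ ^ 2] = _
      rw [ha, hb]
      norm_num
    have key : P * M * N = !![1,0,0,0; 0,1,0,0; 0,0,0,0; 0,0,0,0] := by
      rw [hM]
      ext i j
      fin_cases i <;> fin_cases j <;>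
        · simp [hP, hN, Matrix.mul_apply, Fin.sum_univ_four, Matrix.vecHead, Matrix.vecTail]
          try ring
    have h1 : (P * M * N).rank = (P * M).rank :=
      Matrix.rank_mul_eq_left_of_isUnit_det N (P * M) hNdet
    have h2 : (P * M).rank = M.rank :=
      Matrix.rank_mul_eq_right_of_isUnit_det P M hPdet
    have h3 : (!![1,0,0,0; 0,1,0,0; 0,0,0,0; 0,0,0,0] : Matrix (Fin 4) (Fin 4) ℝ).rank = 2 := by
      have hD : (!![1,0,0,0; 0,1,0,0; 0,0,0,0; 0,0,0,0] : Matrix (Fin 4) (Fin 4) ℝ)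
          = Matrix.diagonal ![1,1,0,0] := by
        ext i j
        fin_cases i <;> fin_cases j <;>
          simp [Matrix.diagonal, Matrix.vecHead, Matrix.vecTail]
      rw [hD, Matrix.rank_diagonal, ← Nat.card_eq_fintype_card, Nat.card_eq_two_iff]
      refine ⟨⟨0, by norm_num⟩, ⟨1, by norm_num⟩, by decide, ?_⟩
      ext ⟨i, hi⟩
      simp only [Set.mem_insert_iff, Set.mem_singleton_iff, Set.mem_univ, iff_true,
        Subtype.mk.injEq]
      fin_cases i
      · left; rfl
      · right; rfl
      · simp at hi
      · simp at hi
    rw [← h2, ← h1, key, h3]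
end

section
/- At every point of ℝ⁴ not lying on Σ₀ = {x₂ = −2x₁²y₁ − 2y₁³, y₂ = 2x₁y₁² + 2x₁³}, the four vector fields D⁽²⁾, R⁽²⁾, I₁⁽²⁾, I₂⁽²⁾ (as in the previous statement) span the tangent space ℝ⁴, i.e. their values at that point are linearly independent. -/
/-- Off the chain locus `Σ₀ = {x₂ + 2x₁²y₁ + 2y₁³ = 0, y₂ − 2x₁y₁² − 2x₁³ = 0}`, the
values of the four prolonged fields `D⁽²⁾, R⁽²⁾, I₁⁽²⁾, I₂⁽²⁾` are linearly
independent, hence span the tangent space ℝ⁴. -/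
theorem prolonged_fields_span_off_chain_locus (x₁ y₁ x₂ y₂ : ℝ)
    (h : ¬(x₂ = -2 * x₁ ^ 2 * y₁ - 2 * y₁ ^ 3 ∧ y₂ = 2 * x₁ * y₁ ^ 2 + 2 * x₁ ^ 3)) :
    LinearIndependent ℝ
      ![(![-x₁, -y₁, -3 * x₂, -3 * y₂] : Fin 4 → ℝ),
        ![-y₁, x₁, -y₂, x₂],
        ![1, 0, -4 * x₁ * y₁, 6 * x₁ ^ 2 + 2 * y₁ ^ 2],
        ![0, 1, -2 * x₁ ^ 2 - 6 * y₁ ^ 2, 4 * x₁ * y₁]] := by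
  rw [show (![(![-x₁, -y₁, -3 * x₂, -3 * y₂] : Fin 4 → ℝ),
        ![-y₁, x₁, -y₂, x₂],
        ![1, 0, -4 * x₁ * y₁, 6 * x₁ ^ 2 + 2 * y₁ ^ 2],
        ![0, 1, -2 * x₁ ^ 2 - 6 * y₁ ^ 2, 4 * x₁ * y₁]]) =
      fun i => (Matrix.of ![(![-x₁, -y₁, -3 * x₂, -3 * y₂] : Fin 4 → ℝ),
        ![-y₁, x₁, -y₂, x₂],
        ![1, 0, -4 * x₁ * y₁, 6 * x₁ ^ 2 + 2 * y₁ ^ 2],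
        ![0, 1, -2 * x₁ ^ 2 - 6 * y₁ ^ 2, 4 * x₁ * y₁]]) i from rfl]
  rw [← Matrix.row_def, Matrix.linearIndependent_rows_iff_isUnit, Matrix.isUnit_iff_isUnit_det,
    isUnit_iff_ne_zero]
  have hA : (x₂ + 2 * x₁ ^ 2 * y₁ + 2 * y₁ ^ 3) ≠ 0 ∨
      (y₂ - 2 * x₁ * y₁ ^ 2 - 2 * x₁ ^ 3) ≠ 0 := by
    by_contra hc
    push_neg at hc
    exact h ⟨by linarith [hc.1], by linarith [hc.2]⟩
  have key : (Matrix.of ![(![-x₁, -y₁, -3 * x₂, -3 * y₂] : Fin 4 → ℝ),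
        ![-y₁, x₁, -y₂, x₂],
        ![1, 0, -4 * x₁ * y₁, 6 * x₁ ^ 2 + 2 * y₁ ^ 2],
        ![0, 1, -2 * x₁ ^ 2 - 6 * y₁ ^ 2, 4 * x₁ * y₁]]).det =
      -3 * ((x₂ + 2 * x₁ ^ 2 * y₁ + 2 * y₁ ^ 3) ^ 2 +
        (y₂ - 2 * x₁ * y₁ ^ 2 - 2 * x₁ ^ 3) ^ 2) := by
    simp [Matrix.det_succ_row_zero, Fin.sum_univ_succ,
      show ((1:Fin 4).succAbove 2) = 3 from rfl,
      show ((2:Fin 4).succAbove 2) = 3 from rfl,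
      show ((3:Fin 4).succAbove 2) = 2 from rfl,
      show (Fin.castSucc 2 : Fin 4) = 2 from rfl]
    ring
  rw [key]
  rcases hA with hA | hA <;> positivity
end

section
/- At every point p = (x₁,y₁,x₂,y₂) of Σ₀ = {x₂ = −2x₁²y₁ − 2y₁³, y₂ = 2x₁y₁² + 2x₁³}, the span of the values D⁽²⁾(p), R⁽²⁾(p), I₁⁽²⁾(p), I₂⁽²⁾(p), J⁽²⁾(p) in ℝ⁴ is exactly 2-dimensional. -/
/-- At every point of the chain locus `Σ₀ = {x₂ = −2x₁²y₁ − 2y₁³, y₂ = 2x₁y₁² + 2x₁³}`,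
the span of the values of `D⁽²⁾, R⁽²⁾, I₁⁽²⁾, I₂⁽²⁾, J⁽²⁾` in ℝ⁴ is exactly
2-dimensional. -/
theorem prolonged_fields_span_dim_two_on_chain_locus (x₁ y₁ x₂ y₂ : ℝ)
    (h₁ : x₂ = -2 * x₁ ^ 2 * y₁ - 2 * y₁ ^ 3)
    (h₂ : y₂ = 2 * x₁ * y₁ ^ 2 + 2 * x₁ ^ 3) :
    Module.finrank ℝ (Submodule.span ℝ
      ({(![-x₁, -y₁, -3 * x₂, -3 * y₂] : Fin 4 → ℝ),
        ![-y₁, x₁, -y₂, x₂],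
        ![1, 0, -4 * x₁ * y₁, 6 * x₁ ^ 2 + 2 * y₁ ^ 2],
        ![0, 1, -2 * x₁ ^ 2 - 6 * y₁ ^ 2, 4 * x₁ * y₁],
        ![0, 0, 0, 0]} : Set (Fin 4 → ℝ))) = 2 := by
  subst h₁ h₂
  set v1 : Fin 4 → ℝ := ![1, 0, -4 * x₁ * y₁, 6 * x₁ ^ 2 + 2 * y₁ ^ 2] with hv1
  set v2 : Fin 4 → ℝ := ![0, 1, -2 * x₁ ^ 2 - 6 * y₁ ^ 2, 4 * x₁ * y₁] with hv2
  have hspan : Submodule.span ℝ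
      ({(![-x₁, -y₁, -3 * (-2 * x₁ ^ 2 * y₁ - 2 * y₁ ^ 3),
          -3 * (2 * x₁ * y₁ ^ 2 + 2 * x₁ ^ 3)] : Fin 4 → ℝ),
        ![-y₁, x₁, -(2 * x₁ * y₁ ^ 2 + 2 * x₁ ^ 3), -2 * x₁ ^ 2 * y₁ - 2 * y₁ ^ 3],
        v1, v2, ![0, 0, 0, 0]} : Set (Fin 4 → ℝ)) =
      Submodule.span ℝ ({v1, v2} : Set (Fin 4 → ℝ)) := by
    apply le_antisymm
    · rw [Submodule.span_le]
      intro v hv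
      simp only [Set.mem_insert_iff, Set.mem_singleton_iff] at hv
      rcases hv with rfl | rfl | rfl | rfl | rfl
      · rw [SetLike.mem_coe, Submodule.mem_span_pair]
        exact ⟨-x₁, -y₁, by funext i; fin_cases i <;> simp [hv1, hv2] <;> ring⟩
      · rw [SetLike.mem_coe, Submodule.mem_span_pair]
        exact ⟨-y₁, x₁, by funext i; fin_cases i <;> simp [hv1, hv2] <;> ring⟩
      · exact Submodule.subset_span (by simp)
      · exact Submodule.subset_span (by simp)
      · have : (![0, 0, 0, 0] : Fin 4 → ℝ) = 0 := by funext i; fin_cases i <;> simp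
        rw [this]; exact (Submodule.span ℝ _).zero_mem
    · apply Submodule.span_mono
      intro v hv
      simp only [Set.mem_insert_iff, Set.mem_singleton_iff] at hv
      rcases hv with rfl | rfl <;> simp
  rw [hspan]
  have hli : LinearIndependent ℝ ![v1, v2] := by
    rw [LinearIndependent.pair_iff]
    intro s t hst
    have h0 : (s • v1 + t • v2) 0 = 0 := by rw [hst]; rfl
    have h1 : (s • v1 + t • v2) 1 = 0 := by rw [hst]; rfl
    simp [hv1, hv2] at h0 h1
    exact ⟨h0, h1⟩
  have hrange : ({v1, v2} : Set (Fin 4 → ℝ)) = Set.range ![v1, v2] := by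
    simp [Set.range_comp]
    ext w
    simp [Fin.exists_fin_two]
    tauto
  rw [hrange, finrank_span_eq_card hli]
  simp
end

section
/- If a biholomorphism (z,w) ↦ (z + f(z,w), w + g(z,w)) with f,g vanishing to order ≥ 2 at 0 maps the hypersurface {v = z·z̄ + O₃(z,z̄,u)} to {v' = z'·z̄' + O₃(z',z̄',u')}, then writing g(z,w) = α z² + β zw + c w² + O₃(z,w), one must have α = 0, β = 0, and c ∈ ℝ (i.e. g_{zz}(0) = 0, g_{zw}(0) = 0, Im g_{ww}(0) = 0). -/
open Complex

set_option maxHeartbeats 1000000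

lemma zero_of_small_bound (L K δ : ℝ) (hδ : 0 < δ) (hK : 0 ≤ K)
    (h : ∀ t : ℝ, 0 < t → t < δ → |L| ≤ K * t) : L = 0 := by
  by_contra hL
  have h0 : 0 < |L| := abs_pos.2 hL
  have hK1 : 0 < K + 1 := by linarith
  set t : ℝ := min (δ/2) (|L| / (2*(K+1))) with ht
  have ht0 : 0 < t := lt_min (by linarith) (by positivity)
  have htδ : t < δ := lt_of_le_of_lt (min_le_left _ _) (by linarith)
  have hb := h t ht0 htδ
  have h2 : t ≤ |L| / (2*(K+1)) := min_le_right _ _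
  have h3 : K * t ≤ (K+1) * (|L| / (2*(K+1))) :=
    mul_le_mul (by linarith) h2 (le_of_lt ht0) (by linarith)
  have heq : (K+1) * (|L| / (2*(K+1))) = |L|/2 := by field_simp
  rw [heq] at h3
  linarith

lemma quad_vanish (α β c : ℂ)
    (h : ∀ (z : ℂ) (u : ℝ), (α * z ^ 2 + β * z * (u:ℂ) + c * (u:ℂ) ^ 2).im = 0) :
    α = 0 ∧ β = 0 ∧ c.im = 0 := by
  have h1 := h 1 0
  have h2 := h (1 + I) 0
  have h3 := h 0 1
  have h4 := h 1 1
  have h5 := h I 1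
  simp [Complex.add_im, Complex.mul_im, Complex.mul_re, pow_two] at h1 h2 h3 h4 h5
  refine ⟨?_, ?_, ?_⟩
  · exact Complex.ext (by simp; linarith) (by simp; linarith)
  · exact Complex.ext (by simp; linarith) (by simp; linarith)
  · linarith


/-- If a biholomorphism `(z,w) ↦ (z + f(z,w), w + g(z,w))`, with `f, g` vanishing to
order ≥ 2 at the origin, maps `{v = z z̄ + O₃(z,z̄,u)}` to `{v' = z' z̄' + O₃}`, and if
`g(z,w) = α z² + β z w + c w² + O₃(z,w)`, then `α = 0`, `β = 0` and `c ∈ ℝ`.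
Hypersurfaces are graphed as `v = F(z,u)` with `F z u = |z|² + O₃(|z|,|u|)`; the map
sends `M` to `M'` means the fundamental identity
`Im(w + g(z,w)) = F'(z + f(z,w), Re(w + g(z,w)))` holds with `w = u + i F(z,u)`. -/
theorem quadratic_part_of_normalizing_map
    (f g : ℂ × ℂ → ℂ) (F F' : ℂ → ℝ → ℝ) (α β c : ℂ)
    -- f and g vanish to order ≥ 2 at 0:
    (hf : ∃ C > 0, ∃ ε > 0, ∀ z w : ℂ, ‖z‖ < ε → ‖w‖ < ε →
      ‖f (z, w)‖ ≤ C * (‖z‖ + ‖w‖) ^ 2)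
    -- quadratic part of g:
    (hg : ∃ C > 0, ∃ ε > 0, ∀ z w : ℂ, ‖z‖ < ε → ‖w‖ < ε →
      ‖g (z, w) - (α * z ^ 2 + β * z * w + c * w ^ 2)‖ ≤ C * (‖z‖ + ‖w‖) ^ 3)
    -- M : v = z z̄ + O₃(z,z̄,u):
    (hF : ∃ C > 0, ∃ ε > 0, ∀ z : ℂ, ∀ u : ℝ, ‖z‖ < ε → |u| < ε →
      |F z u - ‖z‖ ^ 2| ≤ C * (‖z‖ + |u|) ^ 3)
    -- M' : v' = z' z̄' + O₃(z',z̄',u'):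
    (hF' : ∃ C > 0, ∃ ε > 0, ∀ z : ℂ, ∀ u : ℝ, ‖z‖ < ε → |u| < ε →
      |F' z u - ‖z‖ ^ 2| ≤ C * (‖z‖ + |u|) ^ 3)
    -- the fundamental identity: the map sends M into M':
    (hmap : ∃ ε > 0, ∀ z : ℂ, ∀ u : ℝ, ‖z‖ < ε → |u| < ε →
      (((u : ℂ) + Complex.I * (F z u : ℂ)) + g (z, (u : ℂ) + Complex.I * (F z u : ℂ))).im
        = F' (z + f (z, (u : ℂ) + Complex.I * (F z u : ℂ)))
            ((((u : ℂ) + Complex.I * (F z u : ℂ))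
              + g (z, (u : ℂ) + Complex.I * (F z u : ℂ))).re)) :
    α = 0 ∧ β = 0 ∧ c.im = 0 := by
  obtain ⟨Cf, hCf0, εf, hεf0, hf⟩ := hf
  obtain ⟨Cg, hCg0, εg, hεg0, hg⟩ := hg
  obtain ⟨CF, hCF0, εF, hεF0, hF⟩ := hF
  obtain ⟨CF', hCF'0, εF', hεF'0, hF'⟩ := hF'
  obtain ⟨εm, hεm0, hmap⟩ := hmap
  -- constants
  obtain ⟨K1, hK1d⟩ : ∃ x : ℝ, x = 1 + 2*CF := ⟨_, rfl⟩
  have hK1 : 1 ≤ K1 := by rw [hK1d]; linarith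
  have hK1n : (0:ℝ) ≤ K1 := by linarith
  obtain ⟨K2, hK2d⟩ : ∃ x : ℝ, x = 1 + 2*K1 := ⟨_, rfl⟩
  have hK2 : 3 ≤ K2 := by rw [hK2d]; linarith
  have hK2p : (0:ℝ) < K2 := by linarith
  obtain ⟨Kq, hKqd⟩ : ∃ x : ℝ, x = ‖α‖ + ‖β‖ + ‖c‖ := ⟨_, rfl⟩
  have hKq : 0 ≤ Kq := by rw [hKqd]; positivity
  have hK2c : (0:ℝ) ≤ (1+K2)^3 := by positivity
  obtain ⟨Cq, hCqd⟩ : ∃ x : ℝ, x = Cg*(1+K2)^3 + ‖β‖*K1 + ‖c‖*K1*(K2+1) := ⟨_, rfl⟩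
  have hCq : 0 ≤ Cq := by
    rw [hCqd]
    have h1 : (0:ℝ) ≤ Cg*(1+K2)^3 := mul_nonneg hCg0.le hK2c
    have h2 : (0:ℝ) ≤ ‖β‖*K1 := mul_nonneg (norm_nonneg _) hK1n
    have h3 : (0:ℝ) ≤ ‖c‖*K1*(K2+1) :=
      mul_nonneg (mul_nonneg (norm_nonneg _) hK1n) (by linarith)
    linarith
  obtain ⟨K3, hK3d⟩ : ∃ x : ℝ, x = Kq + 2*Cq := ⟨_, rfl⟩
  have hK3 : 0 ≤ K3 := by rw [hK3d]; linarith
  obtain ⟨K4, hK4d⟩ : ∃ x : ℝ, x = 1 + 2*K3 := ⟨_, rfl⟩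
  have hK4 : 1 ≤ K4 := by rw [hK4d]; linarith
  have hK4p : (0:ℝ) < K4 := by linarith
  obtain ⟨K5, hK5d⟩ : ∃ x : ℝ, x = Cf*(1+K2)^2 := ⟨_, rfl⟩
  have hK5 : 0 ≤ K5 := by rw [hK5d]; positivity
  obtain ⟨K6, hK6d⟩ : ∃ x : ℝ, x = 1 + 2*K5 := ⟨_, rfl⟩
  have hK6 : 1 ≤ K6 := by rw [hK6d]; linarith
  have hK6p : (0:ℝ) < K6 := by linarith
  obtain ⟨K7, hK7d⟩ : ∃ x : ℝ, x = 2*K4 + 2*K6 := ⟨_, rfl⟩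
  have hK7 : 4 ≤ K7 := by rw [hK7d]; linarith
  have hK7p : (0:ℝ) < K7 := by linarith
  obtain ⟨Ct, hCtd⟩ : ∃ x : ℝ, x = Cq + CF'*(K6+K4)^3 + K5*(K6+1) + CF := ⟨_, rfl⟩
  have hCt : 0 ≤ Ct := by
    rw [hCtd]
    have h1 : (0:ℝ) ≤ CF'*(K6+K4)^3 := mul_nonneg hCF'0.le (by positivity)
    have h2 : (0:ℝ) ≤ K5*(K6+1) := mul_nonneg hK5 (by linarith)
    linarith
  obtain ⟨ε, hεd⟩ : ∃ x : ℝ,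
      x = min 1 (min εF (min εm (min (εg/(2*K2)) (min (εf/(2*K2)) (εF'/K7))))) := ⟨_, rfl⟩
  have hε0 : 0 < ε := by
    rw [hεd]
    refine lt_min one_pos (lt_min hεF0 (lt_min hεm0 (lt_min ?_ (lt_min ?_ ?_))))
    · positivity
    · positivity
    · positivity
  have hε1 : ε ≤ 1 := by rw [hεd]; exact min_le_left _ _
  have hεF : ε ≤ εF := by
    rw [hεd]; exact le_trans (min_le_right _ _) (min_le_left _ _)
  have hεm : ε ≤ εm := by
    rw [hεd]
    exact le_trans (min_le_right _ _) (le_trans (min_le_right _ _) (min_le_left _ _))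
  have hεg' : ε ≤ εg/(2*K2) := by
    rw [hεd]
    exact le_trans (min_le_right _ _) (le_trans (min_le_right _ _)
      (le_trans (min_le_right _ _) (min_le_left _ _)))
  have hεf' : ε ≤ εf/(2*K2) := by
    rw [hεd]
    exact le_trans (min_le_right _ _) (le_trans (min_le_right _ _)
      (le_trans (min_le_right _ _) (le_trans (min_le_right _ _) (min_le_left _ _))))
  have hεF' : ε ≤ εF'/K7 := by
    rw [hεd]
    exact le_trans (min_le_right _ _) (le_trans (min_le_right _ _)
      (le_trans (min_le_right _ _) (le_trans (min_le_right _ _) (min_le_right _ _))))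
  have hεg2 : ε * (2*K2) ≤ εg := by
    rw [← le_div_iff₀ (by positivity)]; exact hεg'
  have hεf2 : ε * (2*K2) ≤ εf := by
    rw [← le_div_iff₀ (by positivity)]; exact hεf'
  have hεF'2 : ε * K7 ≤ εF' := by
    rw [← le_div_iff₀ hK7p]; exact hεF'
  have hεgle : ε ≤ εg := le_trans hεg' (div_le_self hεg0.le (by linarith))
  have hεfle : ε ≤ εf := le_trans hεf' (div_le_self hεf0.le (by linarith))
  -- the key pointwise estimate
  have key : ∀ (z : ℂ) (u : ℝ), ‖z‖ < ε → |u| < ε →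
      |(α * z ^ 2 + β * z * (u:ℂ) + c * (u:ℂ) ^ 2).im| ≤ Ct * (‖z‖ + |u|)^3 := by
    intro z u hz hu
    obtain ⟨s, hsd⟩ : ∃ x : ℝ, x = ‖z‖ + |u| := ⟨_, rfl⟩
    have hs0 : (0:ℝ) ≤ s := by rw [hsd]; positivity
    have hzs : ‖z‖ ≤ s := by rw [hsd]; linarith [abs_nonneg u]
    have hus : |u| ≤ s := by rw [hsd]; linarith [norm_nonneg z]
    have hs2ε : s < 2*ε := by rw [hsd]; linarith
    have hs2 : s < 2 := by linarith
    have hs2s : s^2 ≤ 2*s := by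
      rw [pow_two]; exact mul_le_mul_of_nonneg_right hs2.le hs0
    have hs3s : s^3 ≤ 2*s^2 := by
      have h := mul_le_mul_of_nonneg_left hs2.le (sq_nonneg s)
      calc s^3 = s^2 * s := by ring
        _ ≤ s^2 * 2 := h
        _ = 2*s^2 := by ring
    have hz2 : ‖z‖^2 ≤ s^2 := pow_le_pow_left₀ (norm_nonneg z) hzs 2
    have hu2 : |u|^2 ≤ s^2 := pow_le_pow_left₀ (abs_nonneg u) hus 2
    have hzu : ‖z‖ * |u| ≤ s^2 := by
      rw [pow_two]; exact mul_le_mul hzs hus (abs_nonneg u) hs0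
    have h1 := hF z u (lt_of_lt_of_le hz hεF) (lt_of_lt_of_le hu hεF)
    rw [← hsd] at h1
    obtain ⟨h1a, h1b⟩ := abs_le.1 h1
    have hCFs : CF * s^3 ≤ CF * (2*s^2) := mul_le_mul_of_nonneg_left hs3s hCF0.le
    have hFb : |F z u| ≤ K1 * s^2 := by
      rw [abs_le, hK1d]
      constructor
      · linarith [h1a, hCFs, sq_nonneg ‖z‖, sq_nonneg s]
      · linarith
    obtain ⟨w, hwd⟩ : ∃ x : ℂ, x = (u:ℂ) + Complex.I * (F z u : ℂ) := ⟨_, rfl⟩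
    have hK1s : K1 * s^2 ≤ K1 * (2*s) := mul_le_mul_of_nonneg_left hs2s hK1n
    have hwn : ‖w‖ ≤ K2 * s := by
      have h2 : ‖w‖ ≤ ‖(u:ℂ)‖ + ‖Complex.I * (F z u : ℂ)‖ := by
        rw [hwd]; exact norm_add_le _ _
      simp only [Complex.norm_real, Real.norm_eq_abs, norm_mul, Complex.norm_I, one_mul] at h2
      rw [hK2d]
      linarith
    have hK2sε : K2 * s < K2 * (2*ε) := mul_lt_mul_of_pos_left hs2ε hK2p
    have hwεg : ‖w‖ < εg := by linarith
    have hwεf : ‖w‖ < εf := by linarith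
    have hzw : ‖z‖ + ‖w‖ ≤ (1+K2)*s := by linarith
    have hg1 := hg z w (lt_of_lt_of_le hz hεgle) hwεg
    have hg1' : ‖g (z, w) - (α * z ^ 2 + β * z * w + c * w ^ 2)‖ ≤ Cg*(1+K2)^3 * s^3 := by
      refine le_trans hg1 ?_
      have h := pow_le_pow_left₀ (by positivity) hzw 3
      calc Cg * (‖z‖ + ‖w‖)^3 ≤ Cg * ((1+K2)*s)^3 :=
            mul_le_mul_of_nonneg_left h hCg0.le
        _ = Cg*(1+K2)^3 * s^3 := by ring
    have hwsub : w - (u:ℂ) = Complex.I * (F z u : ℂ) := by rw [hwd]; ring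
    have hwsubn : ‖w - (u:ℂ)‖ = |F z u| := by
      rw [hwsub]; simp [Complex.norm_real, Real.norm_eq_abs]
    have hwaddn : ‖w + (u:ℂ)‖ ≤ (K2+1)*s := by
      have h := norm_add_le w ((u:ℂ))
      simp only [Complex.norm_real, Real.norm_eq_abs] at h
      linarith
    have hqd : ‖(α * z ^ 2 + β * z * w + c * w ^ 2) -
        (α * z ^ 2 + β * z * (u:ℂ) + c * (u:ℂ) ^ 2)‖
        ≤ (‖β‖*K1 + ‖c‖*K1*(K2+1)) * s^3 := by
      have hqdiff : (α * z ^ 2 + β * z * w + c * w ^ 2) -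
          (α * z ^ 2 + β * z * (u:ℂ) + c * (u:ℂ) ^ 2)
          = β*z*(w - (u:ℂ)) + c*(w - (u:ℂ))*(w + (u:ℂ)) := by ring
      rw [hqdiff]
      have t1 : ‖β*z*(w - (u:ℂ))‖ ≤ ‖β‖ * s * (K1*s^2) := by
        rw [norm_mul, norm_mul, hwsubn]
        have hb1 : ‖β‖ * ‖z‖ ≤ ‖β‖ * s := mul_le_mul_of_nonneg_left hzs (norm_nonneg _)
        have := mul_le_mul hb1 hFb (abs_nonneg _) (by positivity)
        linarith
      have t2 : ‖c*(w - (u:ℂ))*(w + (u:ℂ))‖ ≤ ‖c‖ * (K1*s^2) * ((K2+1)*s) := by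
        rw [norm_mul, norm_mul, hwsubn]
        have hb1 : ‖c‖ * |F z u| ≤ ‖c‖ * (K1*s^2) :=
          mul_le_mul_of_nonneg_left hFb (norm_nonneg _)
        have := mul_le_mul hb1 hwaddn (norm_nonneg _) (by positivity)
        linarith
      refine le_trans (norm_add_le _ _) ?_
      have e : (‖β‖*K1 + ‖c‖*K1*(K2+1)) * s^3
          = ‖β‖ * s * (K1*s^2) + ‖c‖ * (K1*s^2) * ((K2+1)*s) := by ring
      linarith [t1, t2]
    have hgq : ‖g (z, w) - (α * z ^ 2 + β * z * (u:ℂ) + c * (u:ℂ) ^ 2)‖ ≤ Cq * s^3 := by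
      have htri := norm_add_le (g (z, w) - (α * z ^ 2 + β * z * w + c * w ^ 2))
        ((α * z ^ 2 + β * z * w + c * w ^ 2) - (α * z ^ 2 + β * z * (u:ℂ) + c * (u:ℂ) ^ 2))
      rw [sub_add_sub_cancel] at htri
      rw [hCqd]
      have e : (Cg*(1+K2)^3 + (‖β‖*K1 + ‖c‖*K1*(K2+1))) * s^3
          = Cg*(1+K2)^3 * s^3 + (‖β‖*K1 + ‖c‖*K1*(K2+1)) * s^3 := by ring
      linarith
    have hqn : ‖α * z ^ 2 + β * z * (u:ℂ) + c * (u:ℂ) ^ 2‖ ≤ Kq * s^2 := by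
      have t0 := norm_add_le (α * z ^ 2 + β * z * (u:ℂ)) (c * (u:ℂ) ^ 2)
      have t1 := norm_add_le (α * z ^ 2) (β * z * (u:ℂ))
      have e1 : ‖α * z ^ 2‖ = ‖α‖ * ‖z‖^2 := by rw [norm_mul, norm_pow]
      have e2 : ‖β * z * (u:ℂ)‖ = ‖β‖ * ‖z‖ * |u| := by
        rw [norm_mul, norm_mul, Complex.norm_real, Real.norm_eq_abs]
      have e3 : ‖c * (u:ℂ) ^ 2‖ = ‖c‖ * |u|^2 := by
        rw [norm_mul, norm_pow, Complex.norm_real, Real.norm_eq_abs]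
      rw [hKqd]
      have p1 := mul_le_mul_of_nonneg_left hz2 (norm_nonneg α)
      have p2 := mul_le_mul_of_nonneg_left hu2 (norm_nonneg c)
      have p3 := mul_le_mul_of_nonneg_left hzu (norm_nonneg β)
      have e4 : ‖β‖ * (‖z‖ * |u|) = ‖β‖ * ‖z‖ * |u| := by ring
      rw [e4] at p3
      have e5 : (‖α‖ + ‖β‖ + ‖c‖) * s^2 = ‖α‖*s^2 + ‖β‖*s^2 + ‖c‖*s^2 := by ring
      linarith
    have hCqs : Cq * s^3 ≤ Cq * (2*s^2) := mul_le_mul_of_nonneg_left hs3s hCq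
    have hgb : ‖g (z, w)‖ ≤ K3 * s^2 := by
      have htri := norm_add_le (g (z, w) - (α * z ^ 2 + β * z * (u:ℂ) + c * (u:ℂ) ^ 2))
        (α * z ^ 2 + β * z * (u:ℂ) + c * (u:ℂ) ^ 2)
      rw [sub_add_cancel] at htri
      rw [hK3d]
      have e : (Kq + 2*Cq) * s^2 = Kq*s^2 + Cq*(2*s^2) := by ring
      linarith
    have hmap1 := hmap z u (lt_of_lt_of_le hz hεm) (lt_of_lt_of_le hu hεm)
    rw [← hwd] at hmap1
    have hwim : (w + g (z, w)).im = F z u + (g (z, w)).im := by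
      rw [Complex.add_im, hwd]; simp
    have hwre : (w + g (z, w)).re = u + (g (z, w)).re := by
      rw [Complex.add_re, hwd]; simp
    have hgre : |(g (z, w)).re| ≤ ‖g (z, w)‖ := Complex.abs_re_le_norm _
    have hK3s : K3 * s^2 ≤ K3 * (2*s) := mul_le_mul_of_nonneg_left hs2s hK3
    have hRe : |(w + g (z, w)).re| ≤ K4 * s := by
      rw [hwre]
      refine le_trans (abs_add_le u ((g (z, w)).re)) ?_
      rw [hK4d]
      linarith
    have hεK4 : K4 * (2*ε) + K6 * (2*ε) ≤ εF' := by
      have e : K4 * (2*ε) + K6 * (2*ε) = ε * K7 := by rw [hK7d]; ring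
      linarith
    have hεK6p : 0 < K6 * (2*ε) := by positivity
    have hεK4p : 0 < K4 * (2*ε) := by positivity
    have hK4sε : K4 * s < K4 * (2*ε) := mul_lt_mul_of_pos_left hs2ε hK4p
    have hReε : |(w + g (z, w)).re| < εF' := by linarith
    have hf1 := hf z w (lt_of_lt_of_le hz hεfle) hwεf
    have hf1' : ‖f (z, w)‖ ≤ K5 * s^2 := by
      refine le_trans hf1 ?_
      have h := pow_le_pow_left₀ (by positivity) hzw 2
      calc Cf * (‖z‖ + ‖w‖)^2 ≤ Cf * ((1+K2)*s)^2 :=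
            mul_le_mul_of_nonneg_left h hCf0.le
        _ = K5 * s^2 := by rw [hK5d]; ring
    have hK5s : K5 * s^2 ≤ K5 * (2*s) := mul_le_mul_of_nonneg_left hs2s hK5
    have hz'n : ‖z + f (z, w)‖ ≤ K6 * s := by
      refine le_trans (norm_add_le _ _) ?_
      rw [hK6d]
      linarith
    have hK6sε : K6 * s < K6 * (2*ε) := mul_lt_mul_of_pos_left hs2ε hK6p
    have hz'ε : ‖z + f (z, w)‖ < εF' := by linarith
    have hF'1 := hF' (z + f (z, w)) ((w + g (z, w)).re) hz'ε hReε
    have hF'1' : |F' (z + f (z, w)) ((w + g (z, w)).re) - ‖z + f (z, w)‖^2|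
        ≤ CF'*(K6+K4)^3 * s^3 := by
      refine le_trans hF'1 ?_
      have hb : ‖z + f (z, w)‖ + |(w + g (z, w)).re| ≤ (K6+K4)*s := by linarith
      have h := pow_le_pow_left₀ (by positivity) hb 3
      calc CF' * (‖z + f (z, w)‖ + |(w + g (z, w)).re|)^3 ≤ CF' * ((K6+K4)*s)^3 :=
            mul_le_mul_of_nonneg_left h hCF'0.le
        _ = CF'*(K6+K4)^3 * s^3 := by ring
    have hz'2 : |‖z + f (z, w)‖^2 - ‖z‖^2| ≤ K5*(K6+1) * s^3 := by
      have hd : |‖z + f (z, w)‖ - ‖z‖| ≤ ‖f (z, w)‖ := by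
        have := abs_norm_sub_norm_le (z + f (z, w)) z
        simpa using this
      obtain ⟨hda, hdb⟩ := abs_le.1 hd
      have hn1 : (0:ℝ) ≤ ‖z + f (z, w)‖ := norm_nonneg _
      have hn2 : (0:ℝ) ≤ ‖z‖ := norm_nonneg _
      have hsum : ‖z + f (z, w)‖ + ‖z‖ ≤ (K6+1)*s := by linarith
      have hsumnn : (0:ℝ) ≤ ‖z + f (z, w)‖ + ‖z‖ := by linarith
      have hK5snn : (0:ℝ) ≤ K5 * s^2 := mul_nonneg hK5 (sq_nonneg s)
      have hub : (‖z + f (z, w)‖ - ‖z‖) * (‖z + f (z, w)‖ + ‖z‖)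
          ≤ (K5*s^2) * ((K6+1)*s) :=
        mul_le_mul (by linarith) hsum hsumnn hK5snn
      have hlb : (‖z‖ - ‖z + f (z, w)‖) * (‖z + f (z, w)‖ + ‖z‖)
          ≤ (K5*s^2) * ((K6+1)*s) :=
        mul_le_mul (by linarith) hsum hsumnn hK5snn
      have e1 : (‖z + f (z, w)‖ - ‖z‖) * (‖z + f (z, w)‖ + ‖z‖)
          = ‖z + f (z, w)‖^2 - ‖z‖^2 := by ring
      have e2 : (‖z‖ - ‖z + f (z, w)‖) * (‖z + f (z, w)‖ + ‖z‖)
          = ‖z‖^2 - ‖z + f (z, w)‖^2 := by ring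
      have e3 : (K5*s^2) * ((K6+1)*s) = K5*(K6+1) * s^3 := by ring
      rw [abs_le]
      constructor
      · linarith [hlb]
      · linarith [hub]
    have him : |(g (z, w)).im - (α * z ^ 2 + β * z * (u:ℂ) + c * (u:ℂ) ^ 2).im|
        ≤ Cq * s^3 := by
      refine le_trans ?_ hgq
      have := Complex.abs_im_le_norm (g (z, w) - (α * z ^ 2 + β * z * (u:ℂ) + c * (u:ℂ) ^ 2))
      simpa [Complex.sub_im] using this
    -- combine
    rw [hwim] at hmap1
    rw [← hsd]
    obtain ⟨e2a, e2b⟩ := abs_le.1 hF'1'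
    obtain ⟨e3a, e3b⟩ := abs_le.1 hz'2
    obtain ⟨e4a, e4b⟩ := abs_le.1 him
    rw [abs_le, hCtd]
    have efin : (Cq + CF'*(K6+K4)^3 + K5*(K6+1) + CF) * s^3
        = Cq*s^3 + CF'*(K6+K4)^3*s^3 + K5*(K6+1)*s^3 + CF*s^3 := by ring
    constructor
    · linarith
    · linarith
  -- scaling argument
  have key2 : ∀ (z : ℂ) (u : ℝ), (α * z ^ 2 + β * z * (u:ℂ) + c * (u:ℂ) ^ 2).im = 0 := by
    intro z u
    obtain ⟨s0, hs0d⟩ : ∃ x : ℝ, x = ‖z‖ + |u| + 1 := ⟨_, rfl⟩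
    have hs0 : (0:ℝ) < s0 := by rw [hs0d]; positivity
    have hzs0 : ‖z‖ + |u| ≤ s0 := by rw [hs0d]; linarith
    refine zero_of_small_bound _ (Ct * s0^3) (ε / s0) (div_pos hε0 hs0)
      (mul_nonneg hCt (by positivity)) ?_
    intro t ht0 htδ
    have hts0 : t * s0 < ε := by
      rw [lt_div_iff₀ hs0] at htδ; linarith
    have hz1 : ‖(t:ℂ) * z‖ < ε := by
      rw [norm_mul, Complex.norm_real, Real.norm_eq_abs, abs_of_pos ht0]
      have : t * ‖z‖ ≤ t * s0 :=
        mul_le_mul_of_nonneg_left (by linarith [abs_nonneg u]) ht0.le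
      linarith
    have hu1 : |t * u| < ε := by
      rw [abs_mul, abs_of_pos ht0]
      have : t * |u| ≤ t * s0 :=
        mul_le_mul_of_nonneg_left (by linarith [norm_nonneg z]) ht0.le
      linarith
    have hk := key ((t:ℂ) * z) (t * u) hz1 hu1
    have heq : α * ((t:ℂ) * z) ^ 2 + β * ((t:ℂ) * z) * ((t * u : ℝ):ℂ)
        + c * ((t * u : ℝ):ℂ) ^ 2
        = ((t^2 : ℝ):ℂ) * (α * z ^ 2 + β * z * (u:ℂ) + c * (u:ℂ) ^ 2) := by
      push_cast; ring
    rw [heq] at hk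
    have him2 : (((t^2 : ℝ):ℂ) * (α * z ^ 2 + β * z * (u:ℂ) + c * (u:ℂ) ^ 2)).im
        = t^2 * (α * z ^ 2 + β * z * (u:ℂ) + c * (u:ℂ) ^ 2).im := by
      rw [Complex.mul_im, Complex.ofReal_re, Complex.ofReal_im]; ring
    rw [him2, _root_.abs_mul, _root_.abs_of_nonneg (sq_nonneg t)] at hk
    have hnm : ‖(t:ℂ) * z‖ + |t * u| = t * (‖z‖ + |u|) := by
      rw [norm_mul, Complex.norm_real, Real.norm_eq_abs, abs_mul, abs_of_pos ht0]; ring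
    rw [hnm] at hk
    refine le_of_mul_le_mul_left ?_ (show (0:ℝ) < t^2 by positivity)
    refine le_trans hk ?_
    have hcube : (t * (‖z‖ + |u|))^3 ≤ (t * s0)^3 := by
      apply pow_le_pow_left₀ (by positivity)
      exact mul_le_mul_of_nonneg_left hzs0 ht0.le
    calc Ct * (t * (‖z‖ + |u|))^3 ≤ Ct * (t * s0)^3 :=
          mul_le_mul_of_nonneg_left hcube hCt
      _ = t^2 * (Ct * s0^3 * t) := by ring
  exact quad_vanish α β c key2
end

section
/- Suppose five real-analytic (or formal) functions f₀, f₁, f₂, g₀, g₁ of a real variable u satisfy: (i) g₀ − ḡ₀ ≡ 0; (ii) 2f̄₀ + i g₁ ≡ 0; (iii) f₁ + f̄₁ − g₀' ≡ 0; (iv) 2f₂ − 2i f̄₀' − g₁' ≡ 0; (v) f₁' − f̄₁' ≡ 0; (vi) f₂' ≡ 0 and −f̄₀'' − (i/2)g₁'' ≡ 0; (vii) f₁'' + f̄₁'' ≡ 0; together with initial conditions f₀(0) = f₀'(0) = 0, f₁(0) = 0, g₀(0) = g₀'(0) = 0, Re g₀''(0) = 0, g₁(0) = 0. Then f₀ ≡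 f₁ ≡ f₂ ≡ 0 and g₀ ≡ g₁ ≡ 0. -/
open Complex

private lemma deriv_conj_comp (f : ℝ → ℂ) (u : ℝ) (hf : DifferentiableAt ℝ f u) :
    deriv (fun x => (starRingEnd ℂ) (f x)) u = (starRingEnd ℂ) (deriv f u) := by
  have h := ((Complex.conjCLE :
      ℂ →L[ℝ] ℂ).hasFDerivAt.comp_hasDerivAt u hf.hasDerivAt).deriv
  exact h

private lemma diff_conj_comp (f : ℝ → ℂ) (u : ℝ) (hf : DifferentiableAt ℝ f u) :
    DifferentiableAt ℝ (fun x => (starRingEnd ℂ) (f x)) u :=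
  ((Complex.conjCLE : ℂ →L[ℝ] ℂ).hasFDerivAt.comp_hasDerivAt u
    hf.hasDerivAt).differentiableAt

/-- The uniqueness system for the Moser normal form.  Five real-analytic functions
`f₀, f₁, f₂, g₀, g₁ : ℝ → ℂ` satisfying the seven linear ODEs obtained by extracting
the coefficients of `z^j z̄^k` in `Re{ i g(z,u+izz̄) + 2 z̄ f(z,u+izz̄) } = 0`,
together with the stated initial conditions, all vanish identically. -/
theorem moser_uniqueness_ode_system
    (f₀ f₁ f₂ g₀ g₁ : ℝ → ℂ)
    (hf₀ : ∀ u, AnalyticAt ℝ f₀ u) (hf₁ : ∀ u, AnalyticAt ℝ f₁ u)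
    (hf₂ : ∀ u, AnalyticAt ℝ f₂ u) (hg₀ : ∀ u, AnalyticAt ℝ g₀ u)
    (hg₁ : ∀ u, AnalyticAt ℝ g₁ u)
    -- (i)  g₀ − ḡ₀ ≡ 0
    (e1 : ∀ u, g₀ u - (starRingEnd ℂ) (g₀ u) = 0)
    -- (ii)  2 f̄₀ + i g₁ ≡ 0
    (e2 : ∀ u, 2 * (starRingEnd ℂ) (f₀ u) + I * g₁ u = 0)
    -- (iii)  f₁ + f̄₁ − g₀' ≡ 0
    (e3 : ∀ u, f₁ u + (starRingEnd ℂ) (f₁ u) - deriv g₀ u = 0)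
    -- (iv)  2 f₂ − 2i f̄₀' − g₁' ≡ 0
    (e4 : ∀ u, 2 * f₂ u - 2 * I * (starRingEnd ℂ) (deriv f₀ u) - deriv g₁ u = 0)
    -- (v)  f₁' − f̄₁' ≡ 0
    (e5 : ∀ u, deriv f₁ u - (starRingEnd ℂ) (deriv f₁ u) = 0)
    -- (vi)  f₂' ≡ 0  and  −f̄₀'' − (i/2) g₁'' ≡ 0
    (e6 : ∀ u, deriv f₂ u = 0)
    (e6' : ∀ u, -(starRingEnd ℂ) (deriv (deriv f₀) u) - (I / 2) * deriv (deriv g₁) u = 0)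
    -- (vii)  f₁'' + f̄₁'' ≡ 0
    (e7 : ∀ u, deriv (deriv f₁) u + (starRingEnd ℂ) (deriv (deriv f₁) u) = 0)
    -- initial conditions
    (i1 : f₀ 0 = 0) (i2 : deriv f₀ 0 = 0) (i3 : f₁ 0 = 0)
    (i4 : g₀ 0 = 0) (i5 : deriv g₀ 0 = 0) (i6 : (deriv (deriv g₀) 0).re = 0)
    (i7 : g₁ 0 = 0) :
    (∀ u, f₀ u = 0) ∧ (∀ u, f₁ u = 0) ∧ (∀ u, f₂ u = 0) ∧
    (∀ u, g₀ u = 0) ∧ (∀ u, g₁ u = 0) := by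
  have df₀ : Differentiable ℝ f₀ := fun u => (hf₀ u).differentiableAt
  have df₁ : Differentiable ℝ f₁ := fun u => (hf₁ u).differentiableAt
  have df₂ : Differentiable ℝ f₂ := fun u => (hf₂ u).differentiableAt
  have dg₀ : Differentiable ℝ g₀ := fun u => (hg₀ u).differentiableAt
  -- g₁ = 2 i conj(f₀)
  have hg₁rel : ∀ u, g₁ u = 2 * I * (starRingEnd ℂ) (f₀ u) := by
    intro u
    have h := e2 u
    linear_combination (-I) * h + g₁ u * Complex.I_sq
  -- deriv g₁ u = 2 i conj(f₀' u)
  have hdg₁ : ∀ u, deriv g₁ u = 2 * I * (starRingEnd ℂ) (deriv f₀ u) := by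
    intro u
    have hfun : g₁ = fun x => 2 * I * (starRingEnd ℂ) (f₀ x) := funext hg₁rel
    rw [hfun, deriv_const_mul _ (diff_conj_comp f₀ u (df₀ u)),
      deriv_conj_comp f₀ u (df₀ u)]
  -- f₂ = 2 i conj(f₀')
  have hf₂rel : ∀ u, f₂ u = 2 * I * (starRingEnd ℂ) (deriv f₀ u) := by
    intro u
    have h := e4 u
    rw [hdg₁ u] at h
    linear_combination h / 2 + 2 * I * (starRingEnd ℂ) (deriv f₀ u)
  -- f₂ is constant, and f₂ 0 = 0
  have hf₂const : ∀ u, f₂ u = f₂ 0 := fun u =>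
    is_const_of_deriv_eq_zero df₂ e6 u 0
  have hf₂0 : f₂ 0 = 0 := by rw [hf₂rel 0, i2]; simp
  have hf₂zero : ∀ u, f₂ u = 0 := fun u => (hf₂const u).trans hf₂0
  -- hence f₀' ≡ 0, hence f₀ ≡ 0
  have hdf₀zero : ∀ u, deriv f₀ u = 0 := by
    intro u
    have h := (hf₂rel u).symm.trans (hf₂zero u)
    have h' : (2 * I) * (starRingEnd ℂ) (deriv f₀ u) = 0 := by linear_combination h
    have h2 : (starRingEnd ℂ) (deriv f₀ u) = 0 := by
      rcases mul_eq_zero.mp h' with h0 | h0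
      · exact absurd h0 (by norm_num [Complex.I_ne_zero])
      · exact h0
    simpa using congrArg (starRingEnd ℂ) h2
  have hf₀zero : ∀ u, f₀ u = 0 := fun u =>
    (is_const_of_deriv_eq_zero df₀ hdf₀zero u 0).trans i1
  have hg₁zero : ∀ u, g₁ u = 0 := by
    intro u; rw [hg₁rel u, hf₀zero u]; simp
  -- f₁ : deriv f₁ is differentiable
  have hAn : AnalyticOnNhd ℝ f₁ Set.univ := fun u _ => hf₁ u
  have hAn' : AnalyticOnNhd ℝ (deriv f₁) Set.univ := hAn.deriv
  have ddf₁ : Differentiable ℝ (deriv f₁) := fun u =>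
    (hAn' u (Set.mem_univ u)).differentiableAt
  -- conj(f₁') = f₁' as functions
  have hconjdf₁ : ∀ u, (starRingEnd ℂ) (deriv f₁ u) = deriv f₁ u := by
    intro u; have h := e5 u; linear_combination -h
  -- f₁'' is real: conj(f₁'') = f₁''
  have hconjddf₁ : ∀ u, (starRingEnd ℂ) (deriv (deriv f₁) u) = deriv (deriv f₁) u := by
    intro u
    have hfun : (fun x => (starRingEnd ℂ) (deriv f₁ x)) = deriv f₁ := funext hconjdf₁
    calc (starRingEnd ℂ) (deriv (deriv f₁) u)
        = deriv (fun x => (starRingEnd ℂ) (deriv f₁ x)) u :=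
          (deriv_conj_comp (deriv f₁) u (ddf₁ u)).symm
      _ = deriv (deriv f₁) u := by rw [hfun]
  -- f₁'' = 0
  have hddf₁zero : ∀ u, deriv (deriv f₁) u = 0 := by
    intro u
    have h := e7 u
    rw [hconjddf₁ u] at h
    linear_combination h / 2
  -- deriv f₁ constant
  have hdf₁const : ∀ u, deriv f₁ u = deriv f₁ 0 := fun u =>
    is_const_of_deriv_eq_zero ddf₁ hddf₁zero u 0
  -- deriv g₀ = f₁ + conj f₁
  have hdg₀ : deriv g₀ = fun u => f₁ u + (starRingEnd ℂ) (f₁ u) := by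
    funext u; have h := e3 u; linear_combination -h
  -- deriv (deriv g₀) 0 = f₁'(0) + conj(f₁'(0))
  have hddg₀ : deriv (deriv g₀) 0 = deriv f₁ 0 + (starRingEnd ℂ) (deriv f₁ 0) := by
    rw [hdg₀, deriv_fun_add (df₁ 0) (diff_conj_comp f₁ 0 (df₁ 0)),
      deriv_conj_comp f₁ 0 (df₁ 0)]
  -- f₁'(0) = 0
  have hdf₁0 : deriv f₁ 0 = 0 := by
    have hre : (deriv f₁ 0).re = 0 := by
      have := i6
      rw [hddg₀] at this
      simp [Complex.add_re, Complex.conj_re] at this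
      linarith
    have him : (deriv f₁ 0).im = 0 := by
      have h := hconjdf₁ 0
      have := congrArg Complex.im h
      simp [Complex.conj_im] at this
      linarith
    exact Complex.ext hre him
  have hdf₁zero : ∀ u, deriv f₁ u = 0 := fun u => (hdf₁const u).trans hdf₁0
  have hf₁zero : ∀ u, f₁ u = 0 := fun u =>
    (is_const_of_deriv_eq_zero df₁ hdf₁zero u 0).trans i3
  -- g₀
  have hdg₀zero : ∀ u, deriv g₀ u = 0 := by
    intro u; rw [hdg₀]; simp [hf₁zero u]
  have hg₀zero : ∀ u, g₀ u = 0 := fun u =>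
    (is_const_of_deriv_eq_zero dg₀ hdg₀zero u 0).trans i4
  exact ⟨hf₀zero, hf₁zero, hf₂zero, hg₀zero, hg₁zero⟩
end
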